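/- Let T be a tournament on n = 4k+2 vertices. Then the arrow-simplicity of T satisfies s(T) ≤ 2k. -/

import Mathlib

open Finset

/-- A tournament on vertex set `V`: an orientation of the complete graph.
`r x y` means `x` dominates `y` (the arc `(x,y)` is present). -/
structure Tournament (V : Type*) where
  r : V → V → Bool
  irrefl : ∀ x, r x x = false
  total : ∀ x y, x ≠ y → r x y = !r y x

variable {V : Type*}

/-- Out-neighborhood `v(x)`. -/
def Tournament.outSet [Fintype V] (T : Tournament V) (x : V) : Finset V :=
  univ.filter fun y => T.r x y = true

/-- In-neighborhood `f(x)`. -/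
def Tournament.inSet [Fintype V] (T : Tournament V) (x : V) : Finset V :=
  univ.filter fun y => T.r y x = true

/-- Out-degree `d⁺(x)`. -/
def Tournament.outDeg [Fintype V] (T : Tournament V) (x : V) : ℕ :=
  (T.outSet x).card

/-- In-degree `d⁻(x)`. -/
def Tournament.inDeg [Fintype V] (T : Tournament V) (x : V) : ℕ :=
  (T.inSet x).card

/-- Number of separators `Δ(x,y) = |v(x)∩f(y)| + |f(x)∩v(y)|`. -/
def Tournament.sep [Fintype V] [DecidableEq V] (T : Tournament V) (x y : V) : ℕ :=
  (T.outSet x ∩ T.inSet y).card + (T.inSet x ∩ T.outSet y).card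

/-- `I` is a module of `T` if every vertex outside `I` relates uniformly to `I`. -/
def Tournament.IsModule [Fintype V] (T : Tournament V) (I : Finset V) : Prop :=
  ∀ x ∉ I, (∀ y ∈ I, T.r x y = true) ∨ (∀ y ∈ I, T.r y x = true)

/-- A tournament is simple if all its modules are trivial. -/
def Tournament.IsSimple [Fintype V] (T : Tournament V) : Prop :=
  ∀ I : Finset V, T.IsModule I → I.card ≤ 1 ∨ I = univ

/-- The number of arcs of `T` that are reversed in `T'`. -/
def Tournament.dist [Fintype V] (T T' : Tournament V) : ℕ :=
  (univ.filter fun p : V × V => T.r p.1 p.2 = true ∧ T'.r p.1 p.2 = false).card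

/-- Arrow-simplicity: the least number of arcs whose reversal yields a
non-simple tournament. -/
noncomputable def Tournament.simplicity [Fintype V] (T : Tournament V) : ℕ :=
  sInf {m : ℕ | ∃ T' : Tournament V, ¬ T'.IsSimple ∧ T.dist T' = m}

/-- Subtournament induced on a finset of vertices. -/
def Tournament.sub (T : Tournament V) (s : Finset V) : Tournament {x // x ∈ s} where
  r a b := T.r a b
  irrefl a := T.irrefl a
  total a b h := T.total a b fun e => h (Subtype.ext e)

/-- The relation obtained from `T` by reversing the orientation between `x` and `y`
whenever `g x y` holds. -/
def Tournament.flipRel (T : Tournament V) (g : V → V → Bool) (x y : V) : Bool :=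
  if g x y = true then !T.r x y else T.r x y

/-- Reverse all arcs so that `x` dominates everybody. -/
def Tournament.toDom [DecidableEq V] (T : Tournament V) (x : V) : Tournament V where
  r a b := if a = x then decide (b ≠ x) else if b = x then false else T.r a b
  irrefl a := by
    by_cases h : a = x <;> simp [h, T.irrefl]
  total a b h := by
    by_cases ha : a = x <;> by_cases hb : b = x
    · exact absurd (ha.trans hb.symm) h
    · simp [ha, hb]
    · simp [ha, hb]
    · simp [ha, hb, T.total a b h]

/-- Sum of in-degrees equals sum of out-degree-like counts; key: average in-degree. -/
theorem exists_small_inDeg [Fintype V] [DecidableEq V] (k : ℕ) (T : Tournament V)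
    (hcard : Fintype.card V = 4 * k + 2) : ∃ x : V, T.inDeg x ≤ 2 * k := by
  by_contra h
  push_neg at h
  have hsum : ∀ x : V, T.inDeg x + (univ.filter fun y => T.r x y = true).card = 4 * k + 1 := by
    intro x
    have hdisj : Disjoint (T.inSet x) (univ.filter fun y => T.r x y = true) := by
      rw [Finset.disjoint_left]
      intro a ha hb
      simp only [Tournament.inSet, mem_filter] at ha hb
      have hax : a ≠ x := by
        intro e; subst e; rw [T.irrefl] at ha; simp at ha
      have := T.total a x hax
      rw [ha.2, hb.2] at this; simp at this
    have hunion : T.inSet x ∪ (univ.filter fun y => T.r x y = true) = univ.erase x := by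
      ext a
      simp only [Tournament.inSet, mem_union, mem_filter, mem_erase, mem_univ, true_and,
        and_true]
      constructor
      · rintro (h1 | h1)
        · intro e; subst e; rw [T.irrefl] at h1; simp at h1
        · intro e; subst e; rw [T.irrefl] at h1; simp at h1
      · intro hax
        have := T.total a x hax
        cases hra : T.r a x
        · right; rw [hra] at this; simpa using this.symm
        · left; rfl
    have := Finset.card_union_of_disjoint hdisj
    rw [hunion, Finset.card_erase_of_mem (mem_univ x), card_univ, hcard] at this
    simpa [Tournament.inDeg] using this.symm
  -- total sum of in-degrees equals total sum of out-counts
  have hswap : ∑ x : V, T.inDeg x = ∑ x : V, (univ.filter fun y => T.r x y = true).card := by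
    simp only [Tournament.inDeg, Tournament.inSet, Finset.card_filter]
    rw [Finset.sum_comm]
  have htot : 2 * ∑ x : V, T.inDeg x = (4 * k + 2) * (4 * k + 1) := by
    have h2 := Finset.sum_congr rfl (fun x (_ : x ∈ (univ : Finset V)) => hsum x)
    rw [Finset.sum_add_distrib, Finset.sum_const, card_univ, hcard, smul_eq_mul] at h2
    omega
  have hlow : ∑ x : V, (2 * k + 1) ≤ ∑ x : V, T.inDeg x :=
    Finset.sum_le_sum fun x _ => h x
  rw [Finset.sum_const, card_univ, hcard, smul_eq_mul] at hlow
  nlinarith [htot, hlow]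

theorem dist_toDom [Fintype V] [DecidableEq V] (T : Tournament V) (x : V) :
    T.dist (T.toDom x) = T.inDeg x := by
  unfold Tournament.dist
  have hset : (univ.filter fun p : V × V => T.r p.1 p.2 = true ∧ (T.toDom x).r p.1 p.2 = false)
      = (T.inSet x).image (fun a => (a, x)) := by
    ext p
    simp only [mem_filter, mem_univ, true_and, mem_image, Tournament.inSet]
    simp only [Tournament.toDom]
    constructor
    · rintro ⟨h1, h2⟩
      by_cases ha : p.1 = x
      · exfalso
        have hb : p.2 = x := by
          by_contra hb
          simp [ha, hb] at h2
        rw [hb, ← ha, T.irrefl] at h1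
        exact Bool.false_ne_true h1
      · by_cases hb : p.2 = x
        · exact ⟨p.1, by simp [hb ▸ h1], by rw [← hb]⟩
        · simp only [if_neg ha, if_neg hb] at h2
          rw [h1] at h2
          exact absurd h2 (by simp)
    · rintro ⟨a, ha, hp⟩
      have ha : T.r a x = true := by simpa using ha
      have hax : a ≠ x := by
        intro e; subst e; rw [T.irrefl] at ha; exact Bool.false_ne_true ha
      subst hp
      exact ⟨ha, by simp [hax]⟩
  rw [hset, Finset.card_image_of_injective _ (fun a b h => (Prod.mk.injEq _ _ _ _ ▸ h).1)]
  rfl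

theorem toDom_not_simple [Fintype V] [DecidableEq V] (T : Tournament V) (x : V)
    (h3 : 3 ≤ Fintype.card V) : ¬ (T.toDom x).IsSimple := by
  intro hs
  have hmod : (T.toDom x).IsModule (univ.erase x) := by
    intro z hz
    have hzx : z = x := by
      by_contra hne
      exact hz (mem_erase.2 ⟨hne, mem_univ z⟩)
    left
    intro y hy
    have hyx : y ≠ x := (mem_erase.1 hy).1
    simp [Tournament.toDom, hzx, hyx]
  rcases hs _ hmod with h1 | h1
  · rw [Finset.card_erase_of_mem (mem_univ x), card_univ] at h1
    omega
  · have := h1 ▸ Finset.notMem_erase x univ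
    exact this (mem_univ x)

/-- If `n = 4k+2` then `s(T) ≤ 2k`. -/
theorem stmt_16 {V : Type*} [Fintype V] [DecidableEq V] (k : ℕ) (T : Tournament V)
    (hcard : Fintype.card V = 4 * k + 2) :
    T.simplicity ≤ 2 * k := by
  rcases Nat.eq_zero_or_pos k with hk | hk
  · -- k = 0 : every tournament on 2 vertices is simple, so the set is empty
    subst hk
    have hempty : {m : ℕ | ∃ T' : Tournament V, ¬ T'.IsSimple ∧ T.dist T' = m} = ∅ := by
      ext m
      simp only [Set.mem_setOf_eq, Set.mem_empty_iff_false, iff_false, not_exists]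
      rintro T' ⟨hns, _⟩
      apply hns
      intro I _
      rcases Nat.lt_or_ge I.card 2 with h | h
      · left; omega
      · right
        have h2 := Finset.card_le_univ I
        rw [hcard] at h2
        apply Finset.eq_univ_of_card
        rw [hcard]
        omega
    rw [Tournament.simplicity, hempty, Nat.sInf_empty]
  · obtain ⟨x, hx⟩ := exists_small_inDeg k T hcard
    have hmem : T.dist (T.toDom x) ∈
        {m : ℕ | ∃ T' : Tournament V, ¬ T'.IsSimple ∧ T.dist T' = m} :=
      ⟨T.toDom x, toDom_not_simple T x (by omega), rfl⟩
    calc T.simplicity ≤ T.dist (T.toDom x) := Nat.sInf_le hmem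
      _ = T.inDeg x := dist_toDom T x
      _ ≤ 2 * k := hx
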